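/- arXiv:1009.2172 — 2 statements merged into one kernel-verified Lean document; each statement's English description precedes it below -/
import Mathlib

section
/- Let {x₁, ..., xₙ} be a linearly independent subset of a cone normed linear space (V, ‖·‖_c) over a Banach space E with normal cone C of normal constant K. Then there exists c ∈ int C such that for all real scalars α₁, ..., αₙ: ‖α₁x₁ + ⋯ + αₙxₙ‖_c ≥ c·(|α₁| + ⋯ + |αₙ|). -/
open Filter Topology

variable {E V : Type*}

section
variable [NormedAddCommGroup E] [NormedSpace ℝ E] [CompleteSpace E]
variable [AddCommGroup V] [Module ℝ V]

/-- `C` is a cone in the sense of Huang and Zhang. -/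
structure IsCone (C : Set E) : Prop where
  closed : IsClosed C
  combo_mem : ∀ a b : ℝ, 0 ≤ a → 0 ≤ b → ∀ x ∈ C, ∀ y ∈ C, a • x + b • y ∈ C
  mem_or_neg_mem : ∀ x : E, x ∈ C ∨ -x ∈ C

/-- `C` is a normal cone with normal constant `K`:
`θ ≤ a ≤ b` implies `‖a‖ ≤ K * ‖b‖`. -/
structure IsNormalCone (C : Set E) (K : ℝ) extends IsCone C : Prop where
  K_pos : 0 < K
  normal : ∀ a b : E, a ∈ C → b - a ∈ C → ‖a‖ ≤ K * ‖b‖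

/-- `cn` is a cone norm on `V` with values in `E`, with respect to the cone `C`.
The order `u ≤ v` on `E` is `v - u ∈ C`. -/
structure IsConeNorm (C : Set E) (cn : V → E) : Prop where
  nonneg : ∀ x, cn x ∈ C
  eq_zero_iff : ∀ x, cn x = 0 ↔ x = 0
  smul : ∀ (α : ℝ) (x : V), cn (α • x) = |α| • cn x
  triangle : ∀ x y : V, (cn x + cn y) - cn (x + y) ∈ C

/-- Convergence with respect to the cone norm: for every `ε ≫ θ`
(`ε ∈ int C`), eventually `‖xₙ - l‖_c ≪ ε`. -/
def ConeTendsto (C : Set E) (cn : V → E) (x : ℕ → V) (l : V) : Prop :=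
  ∀ ε ∈ interior C, ∃ n₀, ∀ n ≥ n₀, ε - cn (x n - l) ∈ interior C

/-- Cauchy with respect to the cone norm. -/
def ConeCauchy (C : Set E) (cn : V → E) (x : ℕ → V) : Prop :=
  ∀ ε ∈ interior C, ∃ n₀, ∀ m ≥ n₀, ∀ n ≥ n₀, ε - cn (x n - x m) ∈ interior C

theorem cone_norm_linearIndependent_bound (C : Set E) (K : ℝ)
    (hC : IsNormalCone C K) (hint : (interior C).Nonempty)
    (cn : V → E) (hcn : IsConeNorm C cn)
    (n : ℕ) (v : Fin n → V) (hv : LinearIndependent ℝ v) :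
    ∃ c ∈ interior C, ∀ α : Fin n → ℝ,
      cn (∑ i, α i • v i) - (∑ i, |α i|) • c ∈ C := by
  classical
  obtain ⟨e, heInt⟩ := hint
  have heC : e ∈ C := interior_subset heInt
  -- basic facts about the cone
  have hsmulC : ∀ t : ℝ, 0 ≤ t → ∀ x ∈ C, t • x ∈ C := by
    intro t ht x hx
    have := hC.combo_mem t 0 ht le_rfl x hx x hx
    simpa using this
  have hzero : (0 : E) ∈ C := by
    rcases hC.mem_or_neg_mem 0 with h | h
    · exact h
    · simpa using h
  have hanti : ∀ x : E, x ∈ C → -x ∈ C → x = 0 := by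
    intro x hx hnx
    have h := hC.normal x 0 hx (by simpa using hnx)
    have h' : ‖x‖ ≤ 0 := by simpa using h
    simpa using norm_le_zero_iff.mp (h') 
  -- trivial case : 0 is interior
  by_cases h0 : (0 : E) ∈ interior C
  · refine ⟨0, h0, fun α => ?_⟩
    simpa using hcn.nonneg (∑ i, α i • v i)
  -- trivial case : n = 0
  rcases Nat.eq_zero_or_pos n with hn | hn
  · subst hn
    refine ⟨e, heInt, fun α => ?_⟩
    simp [(hcn.eq_zero_iff 0).mpr rfl, hzero]
  have hene : e ≠ 0 := fun h => h0 (h ▸ heInt)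
  obtain ⟨ε, hε, hball⟩ := Metric.mem_nhds_iff.mp (mem_interior_iff_mem_nhds.mp heInt)
  have hballC : Metric.ball e ε ⊆ C := hball
  -- every element is dominated by a multiple of e
  have hub : ∀ x : E, ∃ t : ℝ, t • e - x ∈ C := by
    intro x
    set t : ℝ := ‖x‖ / ε + 1 with ht
    have htpos : 0 < t := by positivity
    have h1 : t * ε = ‖x‖ + ε := by rw [ht]; field_simp
    have h2 : ‖x‖ < t * ε := by rw [h1]; linarith
    have hlt : t⁻¹ * ‖x‖ < ε := by
      have := mul_lt_mul_of_pos_left h2 (inv_pos.mpr htpos)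
      rwa [inv_mul_cancel_left₀ (ne_of_gt htpos)] at this
    have hmem : e - t⁻¹ • x ∈ Metric.ball e ε := by
      rw [Metric.mem_ball, dist_eq_norm]
      have : (e - t⁻¹ • x) - e = -(t⁻¹ • x) := by abel
      rw [this, norm_neg, norm_smul, Real.norm_eq_abs, abs_of_pos (inv_pos.mpr htpos)]
      exact hlt
    refine ⟨t, ?_⟩
    have := hsmulC t htpos.le _ (hballC hmem)
    rwa [smul_sub, smul_inv_smul₀ (ne_of_gt htpos)] at this
  -- every element of E is a multiple of e
  have hrep : ∀ x : E, ∃ t : ℝ, x = t • e := by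
    intro x
    set A : Set ℝ := {t : ℝ | t • e - x ∈ C} with hA
    set B : Set ℝ := {t : ℝ | x - t • e ∈ C} with hB
    have hAc : IsClosed A := hC.closed.preimage (by fun_prop)
    have hBc : IsClosed B := hC.closed.preimage (by fun_prop)
    have hAne : A.Nonempty := hub x
    have hBne : B.Nonempty := by
      obtain ⟨t, ht⟩ := hub (-x)
      refine ⟨-t, ?_⟩
      show x - (-t) • e ∈ C
      have : x - (-t) • e = t • e - -x := by rw [neg_smul]; abel
      rw [this]; exact ht
    by_cases hAB : ∃ t, t ∈ A ∧ t ∈ B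
    · obtain ⟨t, h1, h2⟩ := hAB
      have h2' : -(t • e - x) ∈ C := by rw [neg_sub]; exact h2
      have := hanti _ h1 h2'
      exact ⟨t, (sub_eq_zero.mp this).symm⟩
    · exfalso
      push_neg at hAB
      have hAeq : A = Bᶜ := by
        ext t
        constructor
        · intro htA htB; exact hAB t htA htB
        · intro htB
          rcases hC.mem_or_neg_mem (t • e - x) with h | h
          · exact h
          · exact absurd (by rwa [neg_sub] at h) htB
      have hclopen : IsClopen A := ⟨hAc, hAeq ▸ hBc.isOpen_compl⟩
      rcases isClopen_iff.mp hclopen with h | h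
      · rw [h] at hAne; exact Set.not_nonempty_empty hAne
      · obtain ⟨t, htB⟩ := hBne
        exact hAB t (h ▸ Set.mem_univ t) htB
  have huniq : ∀ s t : ℝ, s • e = t • e → s = t := by
    intro s t h
    have h' : (s - t) • e = 0 := by rw [sub_smul, h, sub_self]
    rcases smul_eq_zero.mp h' with h'' | h''
    · linarith [sub_eq_zero.mp (by exact h'' : s - t = 0)]
    · exact absurd h'' hene
  have hcoeff : ∀ t : ℝ, t • e ∈ C → 0 ≤ t := by
    intro t ht
    by_contra h
    push_neg at h
    have hneg : -(t • e) ∈ C := by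
      rw [← neg_smul]; exact hsmulC (-t) (by linarith) e heC
    have := hanti _ ht hneg
    rcases smul_eq_zero.mp this with h'' | h''
    · exact absurd h'' (ne_of_lt h)
    · exact absurd h'' hene
  have hintm : ∀ m : ℝ, 0 < m → m • e ∈ interior C := by
    intro m hm
    have hopen : IsOpen ((fun x : E => m • x) '' interior C) :=
      isOpenMap_smul₀ (ne_of_gt hm) _ isOpen_interior
    have hsub : ((fun x : E => m • x) '' interior C) ⊆ C := by
      rintro _ ⟨y, hy, rfl⟩
      exact hsmulC m hm.le y (interior_subset hy)
    exact interior_maximal hsub hopen ⟨e, heInt, rfl⟩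
  -- the scalar-valued norm
  choose N hN using fun x : V => hrep (cn x)
  have hN0 : N 0 = 0 := by
    apply huniq
    rw [← hN 0, (hcn.eq_zero_iff 0).mpr rfl, zero_smul]
  have hNnn : ∀ x, 0 ≤ N x := fun x => hcoeff _ (hN x ▸ hcn.nonneg x)
  have hNsmul : ∀ (a : ℝ) (x : V), N (a • x) = |a| * N x := by
    intro a x
    apply huniq
    rw [← hN, hcn.smul, hN, smul_smul]
  have hNadd : ∀ x y : V, N (x + y) ≤ N x + N y := by
    intro x y
    have h := hcn.triangle x y
    rw [hN, hN, hN, ← add_smul, ← sub_smul] at h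
    linarith [hcoeff _ h]
  have hNzero : ∀ x : V, N x = 0 → x = 0 := by
    intro x hx
    exact (hcn.eq_zero_iff x).mp (by rw [hN, hx, zero_smul])
  have hNsum : ∀ (s : Finset (Fin n)) (f : Fin n → V),
      N (∑ i ∈ s, f i) ≤ ∑ i ∈ s, N (f i) := by
    intro s f
    induction s using Finset.induction with
    | empty => simp [hN0]
    | insert _ _ hx ih =>
      rw [Finset.sum_insert hx, Finset.sum_insert hx]
      exact le_trans (hNadd _ _) (by linarith)
  set g : (Fin n → ℝ) → ℝ := fun α => N (∑ i, α i • v i) with hg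
  have hgle : ∀ γ : Fin n → ℝ, g γ ≤ ∑ i, |γ i| * N (v i) := by
    intro γ
    calc N (∑ i, γ i • v i) ≤ ∑ i, N (γ i • v i) := hNsum _ _
    _ = ∑ i, |γ i| * N (v i) := by simp [hNsmul]
  have hgadd : ∀ α β : Fin n → ℝ, g (α + β) ≤ g α + g β := by
    intro α β
    have hs : ∑ i, (α + β) i • v i = (∑ i, α i • v i) + ∑ i, β i • v i := by
      rw [← Finset.sum_add_distrib]
      exact Finset.sum_congr rfl fun i _ => by simp [add_smul]
    show N (∑ i, (α + β) i • v i) ≤ N (∑ i, α i • v i) + N (∑ i, β i • v i)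
    rw [hs]
    exact hNadd _ _
  have hgsmul : ∀ (c : ℝ) (γ : Fin n → ℝ), g (c • γ) = |c| * g γ := by
    intro c γ
    show N (∑ i, (c • γ) i • v i) = |c| * N (∑ i, γ i • v i)
    rw [← hNsmul, Finset.smul_sum]
    congr 1
    exact Finset.sum_congr rfl fun i _ => by simp [smul_smul]
  have hgneg : ∀ γ : Fin n → ℝ, g (-γ) = g γ := by
    intro γ
    have : -γ = (-1 : ℝ) • γ := by ext i; simp
    rw [this, hgsmul]; simp
  set L : ℝ := ∑ i : Fin n, N (v i) with hL
  have hLnn : 0 ≤ L := Finset.sum_nonneg fun i _ => hNnn _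
  have hgle' : ∀ γ : Fin n → ℝ, g γ ≤ L * ‖γ‖ := by
    intro γ
    refine (hgle γ).trans ?_
    calc ∑ i, |γ i| * N (v i) ≤ ∑ i, ‖γ‖ * N (v i) :=
        Finset.sum_le_sum fun i _ =>
          mul_le_mul_of_nonneg_right (by simpa using norm_le_pi_norm γ i) (hNnn _)
    _ = L * ‖γ‖ := by rw [← Finset.mul_sum, mul_comm]
  have habs : ∀ α β : Fin n → ℝ, |g α - g β| ≤ g (α - β) := by
    intro α β
    have h1 : g α ≤ g β + g (α - β) := by
      have := hgadd β (α - β)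
      rwa [show β + (α - β) = α by abel] at this
    have h2 : g β ≤ g α + g (α - β) := by
      have := hgadd α (β - α)
      rw [show α + (β - α) = β by abel] at this
      rwa [show β - α = -(α - β) by abel, hgneg] at this
    rw [abs_sub_le_iff]
    constructor <;> linarith
  have hcont : Continuous g := by
    refine LipschitzWith.continuous (K := ⟨L, hLnn⟩) ?_
    refine LipschitzWith.of_dist_le_mul fun α β => ?_
    calc dist (g α) (g β) = |g α - g β| := Real.dist_eq _ _
    _ ≤ g (α - β) := habs _ _
    _ ≤ L * ‖α - β‖ := hgle' _
    _ = L * dist α β := by rw [dist_eq_norm]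
  set S : Set (Fin n → ℝ) := {α | ∑ i, |α i| = 1} with hS
  have hSclosed : IsClosed S :=
    isClosed_eq (continuous_finset_sum _ fun i _ => (continuous_apply i).abs) continuous_const
  have hSsub : S ⊆ Metric.closedBall 0 1 := by
    intro α hα
    rw [Metric.mem_closedBall, dist_zero_right]
    rw [pi_norm_le_iff_of_nonneg zero_le_one]
    intro i
    calc ‖α i‖ = |α i| := Real.norm_eq_abs _
    _ ≤ ∑ j, |α j| := Finset.single_le_sum (f := fun j => |α j|) (fun j _ => abs_nonneg _) (Finset.mem_univ i)
    _ = 1 := hα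
  have hScompact : IsCompact S :=
    (isCompact_closedBall (0 : Fin n → ℝ) 1).of_isClosed_subset hSclosed hSsub
  have hSne : S.Nonempty := by
    refine ⟨Pi.single (⟨0, hn⟩ : Fin n) 1, ?_⟩
    show ∑ i, |Pi.single (⟨0, hn⟩ : Fin n) (1 : ℝ) i| = 1
    rw [Finset.sum_eq_single (⟨0, hn⟩ : Fin n)]
    · simp
    · intro i _ hi; simp [Pi.single_apply, hi]
    · intro h; exact absurd (Finset.mem_univ _) h
  obtain ⟨α₀, hα₀S, hmin⟩ := hScompact.exists_isMinOn hSne hcont.continuousOn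
  set m : ℝ := g α₀ with hm
  have hmpos : 0 < m := by
    rcases lt_or_eq_of_le (hNnn (∑ i, α₀ i • v i)) with h | h
    · exact h
    · exfalso
      have hz : ∑ i, α₀ i • v i = 0 := hNzero _ h.symm
      have hall := linearIndependent_iff'.mp hv Finset.univ α₀ hz
      have hzero' : ∑ i, |α₀ i| = 0 :=
        Finset.sum_eq_zero fun i _ => by rw [hall i (Finset.mem_univ i)]; simp
      have : (1 : ℝ) = 0 := by rw [← hα₀S]; exact hzero'
      norm_num at this
  refine ⟨m • e, hintm m hmpos, fun α => ?_⟩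
  have key : m * (∑ i, |α i|) ≤ g α := by
    rcases (Finset.sum_nonneg fun i _ => abs_nonneg (α i)).eq_or_lt with h | h
    · rw [← h, mul_zero]
      exact hNnn _
    · set s : ℝ := ∑ i, |α i| with hs
      have hβ : s⁻¹ • α ∈ S := by
        show ∑ i, |(s⁻¹ • α) i| = 1
        have : ∀ i, |(s⁻¹ • α) i| = s⁻¹ * |α i| := by
          intro i
          simp [abs_mul, abs_of_pos (inv_pos.mpr h)]
        rw [Finset.sum_congr rfl fun i _ => this i, ← Finset.mul_sum, ← hs,
          inv_mul_cancel₀ (ne_of_gt h)]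
      have hmle := isMinOn_iff.mp hmin _ hβ
      rw [hgsmul, abs_of_pos (inv_pos.mpr h)] at hmle
      have : m ≤ g α / s := by rwa [div_eq_inv_mul]
      have := (le_div_iff₀ h).mp this
      linarith
  have hrw : cn (∑ i, α i • v i) - (∑ i, |α i|) • (m • e)
      = (g α - (∑ i, |α i|) * m) • e := by
    rw [hN (∑ i, α i • v i), smul_smul, ← sub_smul]
  rw [hrw]
  exact hsmulC _ (by linarith [key]) e heC
end
end

section
/- Every finite dimensional cone normed linear space over a Banach space E with normal cone of normal constant K is cone complete: every Cauchy sequence (with respect to the cone norm) converges to an element of the space. -/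
open Filter Topology

variable {E V : Type*}

section
variable [NormedAddCommGroup E] [NormedSpace ℝ E] [CompleteSpace E]
variable [AddCommGroup V] [Module ℝ V]

set_option linter.unusedSectionVars false

private lemma aux_tri (C : Set E) (K : ℝ) (hC : IsNormalCone C K)
    (cn : V → E) (hcn : IsConeNorm C cn) (x y : V) :
    ‖cn (x + y)‖ ≤ K * (‖cn x‖ + ‖cn y‖) := by
  calc ‖cn (x + y)‖ ≤ K * ‖cn x + cn y‖ :=
        hC.normal _ _ (hcn.nonneg _) (hcn.triangle x y)
    _ ≤ K * (‖cn x‖ + ‖cn y‖) :=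
        mul_le_mul_of_nonneg_left (norm_add_le _ _) hC.K_pos.le

private lemma aux_sum (C : Set E) (K : ℝ) (hC : IsNormalCone C K)
    (cn : V → E) (hcn : IsConeNorm C cn)
    {K₁ : ℝ} (hK : K ≤ K₁) (h1 : 1 ≤ K₁) {ι : Type*} (s : Finset ι) (f : ι → V) :
    ‖cn (∑ i ∈ s, f i)‖ ≤ K₁ ^ s.card * ∑ i ∈ s, ‖cn (f i)‖ := by
  classical
  induction s using Finset.induction_on with
  | empty => simp [(hcn.eq_zero_iff 0).mpr rfl]
  | @insert a s ha ih =>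
    rw [Finset.sum_insert ha, Finset.sum_insert ha, Finset.card_insert_of_notMem ha]
    have htri := aux_tri C K hC cn hcn (f a) (∑ i ∈ s, f i)
    have hp : (1:ℝ) ≤ K₁ ^ s.card := one_le_pow₀ h1
    have hA : (0:ℝ) ≤ ‖cn (f a)‖ := norm_nonneg _
    have hB : (0:ℝ) ≤ ‖cn (∑ i ∈ s, f i)‖ := norm_nonneg _
    have hS : (0:ℝ) ≤ ∑ i ∈ s, ‖cn (f i)‖ :=
      Finset.sum_nonneg fun i _ => norm_nonneg _
    rw [pow_succ]
    calc ‖cn (f a + ∑ i ∈ s, f i)‖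
        ≤ K * (‖cn (f a)‖ + ‖cn (∑ i ∈ s, f i)‖) := htri
      _ ≤ K₁ * (‖cn (f a)‖ + ‖cn (∑ i ∈ s, f i)‖) :=
          mul_le_mul_of_nonneg_right hK (by linarith)
      _ ≤ K₁ * (‖cn (f a)‖ + K₁ ^ s.card * ∑ i ∈ s, ‖cn (f i)‖) :=
          mul_le_mul_of_nonneg_left (by linarith) (by linarith)
      _ ≤ K₁ ^ s.card * K₁ * (‖cn (f a)‖ + ∑ i ∈ s, ‖cn (f i)‖) := by
          nlinarith [mul_nonneg (sub_nonneg.mpr hp)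
            (mul_nonneg (by linarith : (0:ℝ) ≤ K₁) hA)]

private lemma aux_upper (C : Set E) (K : ℝ) (hC : IsNormalCone C K)
    (cn : V → E) (hcn : IsConeNorm C cn) [FiniteDimensional ℝ V] :
    ∃ c : ℝ, 0 ≤ c ∧
      ∀ v : V, ‖cn v‖ ≤ c * ‖(Module.finBasis ℝ V).equivFun v‖ := by
  set K₁ := max K 1 with hK₁def
  have h1 : (1:ℝ) ≤ K₁ := le_max_right _ _
  have hK : K ≤ K₁ := le_max_left _ _
  set b := Module.finBasis ℝ V with hb
  refine ⟨K₁ ^ (Module.finrank ℝ V) * ∑ i, ‖cn (b i)‖,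
    mul_nonneg (pow_nonneg (by linarith) _)
      (Finset.sum_nonneg fun i _ => norm_nonneg _), fun v => ?_⟩
  have hv : ∑ i, b.equivFun v i • b i = v := b.sum_equivFun v
  calc ‖cn v‖ = ‖cn (∑ i, b.equivFun v i • b i)‖ := by rw [hv]
    _ ≤ K₁ ^ (Finset.univ : Finset (Fin (Module.finrank ℝ V))).card *
        ∑ i, ‖cn (b.equivFun v i • b i)‖ :=
        aux_sum C K hC cn hcn hK h1 _ _
    _ = K₁ ^ (Module.finrank ℝ V) * ∑ i, |b.equivFun v i| * ‖cn (b i)‖ := by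
        simp [hcn.smul, norm_smul]
    _ ≤ K₁ ^ (Module.finrank ℝ V) * ∑ i, ‖b.equivFun v‖ * ‖cn (b i)‖ := by
        apply mul_le_mul_of_nonneg_left _ (pow_nonneg (by linarith) _)
        apply Finset.sum_le_sum
        intro i _
        refine mul_le_mul_of_nonneg_right ?_ (norm_nonneg _)
        rw [← Real.norm_eq_abs]
        exact norm_le_pi_norm _ i
    _ = K₁ ^ (Module.finrank ℝ V) * ∑ i, ‖cn (b i)‖ * ‖b.equivFun v‖ := by
        congr 1; exact Finset.sum_congr rfl fun i _ => mul_comm _ _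
    _ = (K₁ ^ (Module.finrank ℝ V) * ∑ i, ‖cn (b i)‖) * ‖b.equivFun v‖ := by
        rw [← Finset.sum_mul, mul_assoc]

private lemma aux_lower (C : Set E) (K : ℝ) (hC : IsNormalCone C K)
    (cn : V → E) (hcn : IsConeNorm C cn) [FiniteDimensional ℝ V] :
    ∃ m : ℝ, 0 < m ∧
      ∀ v : V, m * ‖(Module.finBasis ℝ V).equivFun v‖ ≤ ‖cn v‖ := by
  obtain ⟨c, hc0, hcub⟩ := aux_upper C K hC cn hcn
  set e := (Module.finBasis ℝ V).equivFun with he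
  by_contra h
  push_neg at h
  choose v hv using fun j : ℕ => h ((j : ℝ) + 1)⁻¹ (by positivity)
  have hev : ∀ j, 0 < ‖e (v j)‖ := by
    intro j
    by_contra h0
    push_neg at h0
    have h00 : ‖e (v j)‖ = 0 := le_antisymm h0 (norm_nonneg _)
    have hvj := hv j
    rw [h00, mul_zero] at hvj
    exact (norm_nonneg _).not_gt hvj
  set u : ℕ → (Fin (Module.finrank ℝ V) → ℝ) :=
    fun j => ‖e (v j)‖⁻¹ • e (v j) with hu
  have husphere : ∀ j, u j ∈ Metric.sphere (0 : Fin (Module.finrank ℝ V) → ℝ) 1 := by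
    intro j
    rw [mem_sphere_zero_iff_norm, hu]
    have : e (v j) ≠ 0 := norm_pos_iff.mp (hev j)
    exact norm_smul_inv_norm (𝕜 := ℝ) this
  obtain ⟨a, hamem, φ, hφ, hconv⟩ :=
    (isCompact_sphere (0 : Fin (Module.finrank ℝ V) → ℝ) 1).tendsto_subseq husphere
  have ha1 : ‖a‖ = 1 := mem_sphere_zero_iff_norm.mp hamem
  have hNu : ∀ j, ‖cn (e.symm (u j))‖ < ((j : ℝ) + 1)⁻¹ := by
    intro j
    have h1 : e.symm (u j) = ‖e (v j)‖⁻¹ • v j := by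
      rw [hu]; simp [map_smul]
    rw [h1, hcn.smul, norm_smul]
    have h2 : ‖|‖e (v j)‖⁻¹|‖ = ‖e (v j)‖⁻¹ := by
      rw [Real.norm_eq_abs, abs_abs, abs_of_nonneg (inv_nonneg.mpr (norm_nonneg _))]
    rw [h2]
    calc ‖e (v j)‖⁻¹ * ‖cn (v j)‖
        < ‖e (v j)‖⁻¹ * (((j : ℝ) + 1)⁻¹ * ‖e (v j)‖) :=
          mul_lt_mul_of_pos_left (hv j) (inv_pos.mpr (hev j))
      _ = ((j : ℝ) + 1)⁻¹ := by
          rw [mul_comm ((j : ℝ) + 1)⁻¹, ← mul_assoc, inv_mul_cancel₀ (hev j).ne', one_mul]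
  set K₁ := max K 1 with hK₁def
  have h1 : (1:ℝ) ≤ K₁ := le_max_right _ _
  have hK : K ≤ K₁ := le_max_left _ _
  set w := e.symm a with hw
  have hbound : ∀ j, ‖cn w‖ ≤ K₁ * (c * ‖a - u (φ j)‖ + ((φ j : ℝ) + 1)⁻¹) := by
    intro j
    have hsplit : w = (w - e.symm (u (φ j))) + e.symm (u (φ j)) := by abel
    have htri := aux_tri C K hC cn hcn (w - e.symm (u (φ j))) (e.symm (u (φ j)))
    rw [← hsplit] at htri
    have hub : ‖cn (w - e.symm (u (φ j)))‖ ≤ c * ‖a - u (φ j)‖ := by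
      have : e (w - e.symm (u (φ j))) = a - u (φ j) := by
        rw [map_sub, hw]; simp
      have h3 := hcub (w - e.symm (u (φ j)))
      rw [this] at h3
      exact h3
    have h4 := (hNu (φ j)).le
    have hA : (0:ℝ) ≤ ‖cn (w - e.symm (u (φ j)))‖ := norm_nonneg _
    have hB : (0:ℝ) ≤ ‖cn (e.symm (u (φ j)))‖ := norm_nonneg _
    nlinarith [hC.K_pos.le, norm_nonneg (a - u (φ j))]
  have hlim1 : Tendsto (fun j => ‖a - u (φ j)‖) atTop (𝓝 0) := by
    have h0 : Tendsto (fun j => a - u (φ j)) atTop (𝓝 (a - a)) :=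
      (tendsto_const_nhds (x := a)).sub hconv
    rw [sub_self] at h0
    simpa using h0.norm
  have hlim2 : Tendsto (fun j => ((φ j : ℝ) + 1)⁻¹) atTop (𝓝 0) := by
    have hbase : Tendsto (fun n : ℕ => ((n : ℝ) + 1)⁻¹) atTop (𝓝 0) := by
      simpa [one_div] using tendsto_one_div_add_atTop_nhds_zero_nat (𝕜 := ℝ)
    exact hbase.comp hφ.tendsto_atTop
  have hlim : Tendsto (fun j => K₁ * (c * ‖a - u (φ j)‖ + ((φ j : ℝ) + 1)⁻¹))
      atTop (𝓝 0) := by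
    have := ((hlim1.const_mul c).add hlim2).const_mul K₁
    simpa using this
  have hle : ‖cn w‖ ≤ 0 := ge_of_tendsto hlim (Eventually.of_forall hbound)
  have hw0 : w = 0 := (hcn.eq_zero_iff w).mp (norm_le_zero_iff.mp hle)
  have ha0 : a = 0 := by
    have : e w = a := by rw [hw]; simp
    rw [hw0] at this; simpa using this.symm
  rw [ha0] at ha1; simp at ha1

private lemma aux_triv (C : Set E) (K : ℝ) (hC : IsNormalCone C K)
    (h0 : (0:E) ∈ interior C) (a : E) : a = 0 := by
  obtain ⟨r, hr, hball⟩ := Metric.mem_nhds_iff.mp (mem_interior_iff_mem_nhds.mp h0)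
  have hall : ∀ z : E, z ∈ C := by
    intro z
    rcases eq_or_ne z 0 with rfl | hz
    · exact interior_subset h0
    · have hzn : 0 < ‖z‖ := norm_pos_iff.mpr hz
      have hy : (r / (2 * ‖z‖)) • z ∈ C := by
        apply hball
        rw [Metric.mem_ball, dist_zero_right, norm_smul, Real.norm_eq_abs,
          abs_of_pos (by positivity)]
        rw [div_mul_eq_mul_div, mul_comm]
        calc ‖z‖ * r / (2 * ‖z‖) = r / 2 := by field_simp
          _ < r := by linarith
      have hz' : ‖z‖ ≠ 0 := hzn.ne'
      have hr' : r ≠ 0 := hr.ne'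
      have hcoef : (2 * ‖z‖ / r) • ((r / (2 * ‖z‖)) • z) = z := by
        rw [smul_smul, show (2 * ‖z‖ / r) * (r / (2 * ‖z‖)) = 1 from by
          field_simp, one_smul]
      have hco := hC.combo_mem (2 * ‖z‖ / r) 0 (by positivity) le_rfl _ hy _ hy
      rw [zero_smul, add_zero, hcoef] at hco
      exact hco
  have hnr := hC.normal a 0 (hall a) (by simpa using hall (-a))
  rw [norm_zero, mul_zero] at hnr
  exact norm_le_zero_iff.mp hnr

private lemma aux_smul_int (C : Set E) (hC : IsCone C) {t : ℝ} (ht : 0 < t)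
    {p : E} (hp : p ∈ interior C) : t • p ∈ interior C := by
  have hsub : (fun y : E => t • y) '' interior C ⊆ C := by
    rintro _ ⟨y, hy, rfl⟩
    have := hC.combo_mem t 0 ht.le le_rfl y (interior_subset hy) y (interior_subset hy)
    simpa using this
  have hopen : IsOpen ((fun y : E => t • y) '' interior C) :=
    (isOpenMap_smul₀ ht.ne') _ isOpen_interior
  exact interior_maximal hsub hopen ⟨p, hp, rfl⟩

theorem finiteDimensional_coneComplete (C : Set E) (K : ℝ)
    (hC : IsNormalCone C K) (hint : (interior C).Nonempty)
    (cn : V → E) (hcn : IsConeNorm C cn)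
    [FiniteDimensional ℝ V] :
    ∀ x : ℕ → V, ConeCauchy C cn x → ∃ l : V, ConeTendsto C cn x l := by
  intro x hx
  rcases subsingleton_or_nontrivial E with hE | hE
  · refine ⟨x 0, fun ε hε => ⟨0, fun n _ => ?_⟩⟩
    have : ε - cn (x n - x 0) = ε := by
      rw [Subsingleton.elim (cn (x n - x 0)) 0, sub_zero]
    rw [this]; exact hε
  · set e := (Module.finBasis ℝ V).equivFun with he
    obtain ⟨c, hc0, hcub⟩ := aux_upper C K hC cn hcn
    obtain ⟨m, hm0, hml⟩ := aux_lower C K hC cn hcn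
    obtain ⟨p, hp⟩ := hint
    have hp0 : p ≠ 0 := by
      intro h
      obtain ⟨q, q', hqq⟩ := exists_pair_ne E
      exact hqq ((aux_triv C K hC (h ▸ hp) q).trans (aux_triv C K hC (h ▸ hp) q').symm)
    have hpn : 0 < ‖p‖ := norm_pos_iff.mpr hp0
    have hcauchy : CauchySeq (fun j => e (x j)) := by
      rw [Metric.cauchySeq_iff]
      intro δ hδ
      set t := m * δ / (2 * K * ‖p‖) with htdef
      have ht : 0 < t :=
        div_pos (mul_pos hm0 hδ) (mul_pos (mul_pos two_pos hC.K_pos) hpn)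
      obtain ⟨n₀, hn₀⟩ := hx (t • p) (aux_smul_int C hC.toIsCone ht hp)
      refine ⟨n₀, fun a ha b hb => ?_⟩
      have hmem := hn₀ a ha b hb
      have hnorm : ‖cn (x b - x a)‖ ≤ K * ‖t • p‖ :=
        hC.normal _ _ (hcn.nonneg _) (interior_subset hmem)
      have hnp : ‖t • p‖ = t * ‖p‖ := by
        rw [norm_smul, Real.norm_eq_abs, abs_of_pos ht]
      have hKt : K * (t * ‖p‖) = m * δ / 2 := by
        rw [htdef]
        have h1 : K ≠ 0 := hC.K_pos.ne'
        have h2 : ‖p‖ ≠ 0 := hpn.ne'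
        field_simp
      have hmm := hml (x b - x a)
      have heq : e (x b - x a) = e (x b) - e (x a) := map_sub _ _ _
      rw [heq] at hmm
      have hlt : m * ‖e (x b) - e (x a)‖ < m * δ := by
        calc m * ‖e (x b) - e (x a)‖ ≤ ‖cn (x b - x a)‖ := hmm
          _ ≤ K * (t * ‖p‖) := by rw [← hnp]; exact hnorm
          _ = m * δ / 2 := hKt
          _ < m * δ := by nlinarith
      have := (mul_lt_mul_iff_right₀ hm0).mp hlt
      rw [dist_eq_norm, norm_sub_rev]
      exact this
    obtain ⟨ulim, hu⟩ := cauchySeq_tendsto_of_complete hcauchy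
    refine ⟨e.symm ulim, fun ε hε => ?_⟩
    obtain ⟨r, hr, hball⟩ := Metric.isOpen_iff.mp isOpen_interior ε hε
    have hrc : 0 < r / (c + 1) := by positivity
    obtain ⟨n₀, hn₀⟩ := (Metric.tendsto_atTop.mp hu) (r / (c + 1)) hrc
    refine ⟨n₀, fun n hn => ?_⟩
    have hd := hn₀ n hn
    rw [dist_eq_norm] at hd
    have hkey : ‖cn (x n - e.symm ulim)‖ < r := by
      have heq : e (x n - e.symm ulim) = e (x n) - ulim := by
        rw [map_sub]; simp
      have h3 := hcub (x n - e.symm ulim)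
      rw [heq] at h3
      calc ‖cn (x n - e.symm ulim)‖ ≤ c * ‖e (x n) - ulim‖ := h3
        _ ≤ c * (r / (c + 1)) := mul_le_mul_of_nonneg_left hd.le hc0
        _ < r := by
            rw [show c * (r / (c + 1)) = c * r / (c + 1) from by ring,
              div_lt_iff₀ (by linarith : (0:ℝ) < c + 1)]
            nlinarith
    apply hball
    rw [Metric.mem_ball, dist_eq_norm]
    simpa using hkey

end
end
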